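/- SURE equals the Bayes risk at the mixture distribution: let δ : ℝ → ℝ be continuously differentiable with bounded derivative, and define SURE(δ; F) = ∫ (δ(y) − y)² dF(y) + 2σ² ∫ (δ′(y) − 1) dF(y) + σ² for a distribution F on ℝ. Let F_G be the distribution with density f_G. Then SURE(δ; F_G) = R(G, δ), where R(G, δ) = ∫ [ ∫ (δ(θ + σz) − θ)² φ(z) dz ] dG(θ) is the Bayes risk of the rule δ when θ ∼ G and Y given θ is N(θ, σ²). -/

import Mathlib

open MeasureTheory Set

/-- The standard normal density `φ(z) = (2π)^{-1/2} e^{-z²/2}`. -/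
noncomputable def stdNormalPDF (z : ℝ) : ℝ := (Real.sqrt (2 * Real.pi))⁻¹ * Real.exp (-z ^ 2 / 2)

/-- The mixture (marginal) density `f_G(y) = (1/σ) ∫ φ((y−θ)/σ) dG(θ)`. -/
noncomputable def mixDens (σ : ℝ) (G : Measure ℝ) (y : ℝ) : ℝ :=
  (1 / σ) * ∫ θ, stdNormalPDF ((y - θ) / σ) ∂G

/-- Stein's unbiased risk estimate of the rule `δ` at the distribution with density `f`
(with respect to Lebesgue measure):
`SURE(δ; F) = ∫ (δ(y) − y)² dF(y) + 2σ² ∫ (δ′(y) − 1) dF(y) + σ²`. -/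
noncomputable def SURE (σ : ℝ) (δ : ℝ → ℝ) (f : ℝ → ℝ) : ℝ :=
  (∫ y, (δ y - y) ^ 2 * f y) + 2 * σ ^ 2 * (∫ y, (deriv δ y - 1) * f y) + σ ^ 2

/-- The Bayes risk `R(G, δ) = ∫ [∫ (δ(θ + σz) − θ)² φ(z) dz] dG(θ)` of the rule `δ` when
`θ ∼ G` and `Y | θ ∼ N(θ, σ²)`. -/
noncomputable def bayesRisk (σ : ℝ) (G : Measure ℝ) (δ : ℝ → ℝ) : ℝ :=
  ∫ θ, (∫ z, (δ (θ + σ * z) - θ) ^ 2 * stdNormalPDF z) ∂G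

open Real Filter
lemma phi_eq (z : ℝ) :
    stdNormalPDF z = (Real.sqrt (2 * Real.pi))⁻¹ * Real.exp (-(2⁻¹ : ℝ) * z ^ 2) := by
  unfold stdNormalPDF
  congr 1
  ring_nf

lemma phi_cont : Continuous stdNormalPDF := by
  unfold stdNormalPDF
  fun_prop

lemma phi_nonneg (z : ℝ) : 0 ≤ stdNormalPDF z :=
  mul_nonneg (inv_nonneg.2 (Real.sqrt_nonneg _)) (Real.exp_pos _).le

lemma phi_hasDeriv (z : ℝ) : HasDerivAt stdNormalPDF (-(z * stdNormalPDF z)) z := by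
  have h1 : HasDerivAt (fun z : ℝ => -z ^ 2 / 2) (-z) z := by
    have h := ((hasDerivAt_pow 2 z).neg).div_const 2
    refine h.congr_deriv ?_
    norm_num
    ring
  have h2 := (h1.exp).const_mul ((Real.sqrt (2 * Real.pi))⁻¹)
  have : stdNormalPDF = fun z : ℝ => (Real.sqrt (2 * Real.pi))⁻¹ * Real.exp (-z ^ 2 / 2) := rfl
  rw [this]
  refine h2.congr_deriv ?_
  simp only
  ring

lemma integrable_poly_phi (a b c' : ℝ) :
    Integrable (fun z : ℝ => (a + b * |z| + c' * z ^ 2) * stdNormalPDF z) := by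
  have h0 : Integrable (fun z : ℝ => Real.exp (-(2⁻¹ : ℝ) * z ^ 2)) :=
    integrable_exp_neg_mul_sq (by norm_num)
  have h1 : Integrable (fun z : ℝ => |z| * Real.exp (-(2⁻¹ : ℝ) * z ^ 2)) := by
    have h := (integrable_mul_exp_neg_mul_sq (b := (2⁻¹ : ℝ)) (by norm_num)).abs
    refine h.congr (Eventually.of_forall fun z => ?_)
    simp only
    rw [abs_mul, abs_of_pos (Real.exp_pos _)]
  have h2 : Integrable (fun z : ℝ => z ^ 2 * Real.exp (-(2⁻¹ : ℝ) * z ^ 2)) := by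
    have h := integrable_rpow_mul_exp_neg_mul_sq (b := (2⁻¹ : ℝ)) (by norm_num)
      (s := 2) (by norm_num)
    refine h.congr (Eventually.of_forall fun z => ?_)
    simp only
    rw [Real.rpow_two]
  have e : (fun z : ℝ => (a + b * |z| + c' * z ^ 2) * stdNormalPDF z)
      = fun z : ℝ => (a * (Real.sqrt (2 * Real.pi))⁻¹) * Real.exp (-(2⁻¹ : ℝ) * z ^ 2)
        + (b * (Real.sqrt (2 * Real.pi))⁻¹) * (|z| * Real.exp (-(2⁻¹ : ℝ) * z ^ 2))
        + (c' * (Real.sqrt (2 * Real.pi))⁻¹) * (z ^ 2 * Real.exp (-(2⁻¹ : ℝ) * z ^ 2)) := by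
    funext z; rw [phi_eq]; ring
  rw [e]
  exact ((h0.const_mul _).add (h1.const_mul _)).add (h2.const_mul _)

lemma integrable_bd {h : ℝ → ℝ} (hm : AEStronglyMeasurable h volume) {a b c' : ℝ}
    (hbd : ∀ z, |h z| ≤ a + b * |z| + c' * z ^ 2) :
    Integrable (fun z => h z * stdNormalPDF z) := by
  refine Integrable.mono' (integrable_poly_phi a b c')
    (hm.mul phi_cont.aestronglyMeasurable) (Eventually.of_forall fun z => ?_)
  rw [Real.norm_eq_abs, abs_mul, abs_of_nonneg (phi_nonneg z)]
  exact mul_le_mul_of_nonneg_right (hbd z) (phi_nonneg z)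

lemma integrable_phi : Integrable stdNormalPDF := by
  have := integrable_bd (h := fun _ : ℝ => (1 : ℝ)) aestronglyMeasurable_const
    (a := 1) (b := 0) (c' := 0) (fun z => by simp)
  simpa using this

lemma integrable_z_phi : Integrable (fun z : ℝ => z * stdNormalPDF z) :=
  integrable_bd measurable_id.aestronglyMeasurable (a := 0) (b := 1) (c' := 0)
    (fun z => by simp)

lemma integrable_zsq_phi : Integrable (fun z : ℝ => z ^ 2 * stdNormalPDF z) :=
  integrable_bd (measurable_id.pow_const 2).aestronglyMeasurable (a := 0) (b := 0) (c' := 1)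
    (fun z => by simp [abs_pow, sq_abs])

lemma integral_phi : (∫ z, stdNormalPDF z) = 1 := by
  simp_rw [phi_eq]
  rw [integral_const_mul, integral_gaussian,
    show (Real.pi / 2⁻¹) = 2 * Real.pi by ring]
  exact inv_mul_cancel₀ (ne_of_gt (Real.sqrt_pos.2 (by positivity)))

lemma integral_zsq_phi : (∫ z, z ^ 2 * stdNormalPDF z) = 1 := by
  have huv' : Integrable ((fun x : ℝ => x) * fun z => -(z * stdNormalPDF z)) :=
    integrable_zsq_phi.neg.congr (Eventually.of_forall fun x => by
      simp only [Pi.neg_apply, Pi.mul_apply]; ring)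
  have hu'v : Integrable ((fun _ : ℝ => (1 : ℝ)) * stdNormalPDF) :=
    integrable_phi.congr (Eventually.of_forall fun x => by simp)
  have huv : Integrable ((fun x : ℝ => x) * stdNormalPDF) :=
    integrable_z_phi.congr (Eventually.of_forall fun x => by simp [Pi.mul_apply])
  have key := integral_mul_deriv_eq_deriv_mul_of_integrable
    (u := fun x : ℝ => x) (u' := fun _ : ℝ => (1 : ℝ)) (v := stdNormalPDF)
    (v' := fun z => -(z * stdNormalPDF z))
    (fun x _ => hasDerivAt_id x) (fun x _ => phi_hasDeriv x) huv' hu'v huv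
  have e1 : (∫ x : ℝ, x * -(x * stdNormalPDF x)) = -∫ x : ℝ, x ^ 2 * stdNormalPDF x := by
    rw [← integral_neg]; congr 1; funext x; ring
  have e2 : (∫ x : ℝ, (1 : ℝ) * stdNormalPDF x) = 1 := by
    simp_rw [one_mul]; exact integral_phi
  rw [e1, e2] at key
  linarith

lemma stein {g g' : ℝ → ℝ} (hg : ∀ x, HasDerivAt g (g' x) x) (hg'c : Continuous g')
    {K : ℝ} (hK : ∀ x, |g' x| ≤ K) (hLip : ∀ x y, |g x - g y| ≤ K * |x - y|)
    {σ : ℝ} (hσ : 0 < σ) (θ : ℝ) :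
    (∫ z, g (θ + σ * z) * (z * stdNormalPDF z))
      = σ * ∫ z, g' (θ + σ * z) * stdNormalPDF z := by
  have hdg : Differentiable ℝ g := fun x => (hg x).differentiableAt
  have hgc : Continuous g := hdg.continuous
  have haff : ∀ z : ℝ, HasDerivAt (fun z : ℝ => θ + σ * z) σ z := fun z => by
    simpa using ((hasDerivAt_id z).const_mul σ).const_add θ
  have hu : ∀ z : ℝ, HasDerivAt (fun z : ℝ => g (θ + σ * z)) (g' (θ + σ * z) * σ) z :=
    fun z => (hg (θ + σ * z)).comp z (haff z)
  have hgb : ∀ z : ℝ, |g (θ + σ * z)| ≤ |g θ| + K * σ * |z| := by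
    intro z
    have h1 := hLip (θ + σ * z) θ
    have h2 : |θ + σ * z - θ| = σ * |z| := by
      rw [show θ + σ * z - θ = σ * z by ring, abs_mul, abs_of_pos hσ]
    have := abs_sub_abs_le_abs_sub (g (θ + σ * z)) (g θ)
    rw [h2] at h1
    linarith
  have iA : Integrable (fun z : ℝ => (g (θ + σ * z) * z) * stdNormalPDF z) := by
    refine integrable_bd ((hgc.comp (by fun_prop)).mul continuous_id).aestronglyMeasurable
      (a := 0) (b := |g θ|) (c' := K * σ) (fun z => ?_)
    have h1 := hgb z
    have h2 : |g (θ + σ * z) * z| = |g (θ + σ * z)| * |z| := abs_mul _ _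
    have h3 : (0:ℝ) ≤ |z| := abs_nonneg z
    have h4 : |z| * |z| = z ^ 2 := by rw [← abs_mul, abs_mul_self]; ring
    have h5 := mul_le_mul_of_nonneg_right h1 h3
    calc |g (θ + σ * z) * z| = |g (θ + σ * z)| * |z| := h2
      _ ≤ (|g θ| + K * σ * |z|) * |z| := h5
      _ = |g θ| * |z| + K * σ * (|z| * |z|) := by ring
      _ = 0 + |g θ| * |z| + K * σ * z ^ 2 := by rw [h4]; ring
  have iB : Integrable (fun z : ℝ => (g' (θ + σ * z) * σ) * stdNormalPDF z) := by
    refine integrable_bd ((hg'c.comp (by fun_prop)).mul continuous_const).aestronglyMeasurable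
      (a := K * σ) (b := 0) (c' := 0) (fun z => ?_)
    rw [abs_mul, abs_of_pos hσ]
    have := hK (θ + σ * z)
    have : |g' (θ + σ * z)| * σ ≤ K * σ := mul_le_mul_of_nonneg_right this hσ.le
    simpa using this
  have iC : Integrable (fun z : ℝ => g (θ + σ * z) * stdNormalPDF z) := by
    refine integrable_bd (hgc.comp (by fun_prop)).aestronglyMeasurable
      (a := |g θ|) (b := K * σ) (c' := 0) (fun z => ?_)
    have := hgb z
    simpa [mul_assoc] using this
  have huv' : Integrable ((fun z : ℝ => g (θ + σ * z)) * fun z => -(z * stdNormalPDF z)) :=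
    iA.neg.congr (Eventually.of_forall fun z => by
      simp only [Pi.neg_apply, Pi.mul_apply]; ring)
  have hu'v : Integrable ((fun z : ℝ => g' (θ + σ * z) * σ) * stdNormalPDF) :=
    iB.congr (Eventually.of_forall fun z => by simp only [Pi.mul_apply])
  have huv : Integrable ((fun z : ℝ => g (θ + σ * z)) * stdNormalPDF) :=
    iC.congr (Eventually.of_forall fun z => by simp only [Pi.mul_apply])
  have key := integral_mul_deriv_eq_deriv_mul_of_integrable
    (u := fun z : ℝ => g (θ + σ * z)) (u' := fun z : ℝ => g' (θ + σ * z) * σ)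
    (v := stdNormalPDF) (v' := fun z => -(z * stdNormalPDF z))
    (fun x _ => hu x) (fun x _ => phi_hasDeriv x) huv' hu'v huv
  have e1 : (∫ z : ℝ, g (θ + σ * z) * -(z * stdNormalPDF z))
      = -∫ z : ℝ, g (θ + σ * z) * (z * stdNormalPDF z) := by
    rw [← integral_neg]; congr 1; funext z; ring
  have e2 : (∫ z : ℝ, g' (θ + σ * z) * σ * stdNormalPDF z)
      = σ * ∫ z : ℝ, g' (θ + σ * z) * stdNormalPDF z := by
    rw [← integral_const_mul]; congr 1; funext z; ring
  rw [e1, e2] at key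
  linarith

lemma cov {σ : ℝ} (hσ : 0 < σ) (θ : ℝ) (h : ℝ → ℝ) :
    (∫ z, h (θ + σ * z) * stdNormalPDF z)
      = ∫ y, h y * ((1 / σ) * stdNormalPDF ((y - θ) / σ)) := by
  set F : ℝ → ℝ := fun y => h y * ((1 / σ) * stdNormalPDF ((y - θ) / σ)) with hF
  have e1 : ∀ z : ℝ, h (θ + σ * z) * stdNormalPDF z = σ * F (θ + σ * z) := by
    intro z
    rw [hF]
    simp only
    rw [show (θ + σ * z - θ) / σ = z by field_simp; ring]
    field_simp
  simp_rw [e1]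
  rw [integral_const_mul]
  have e2 : (∫ z : ℝ, F (θ + σ * z)) = σ⁻¹ * ∫ y, F y := by
    have s1 : (∫ z : ℝ, F (θ + σ * z)) = |σ⁻¹| • ∫ w : ℝ, F (θ + w) :=
      Measure.integral_comp_mul_left (fun w => F (θ + w)) σ
    rw [s1, MeasureTheory.integral_add_left_eq_self (fun y => F y) θ,
      abs_of_pos (inv_pos.2 hσ), smul_eq_mul]
  rw [e2, ← mul_assoc, mul_inv_cancel₀ hσ.ne', one_mul]

lemma fubini_key {σ c : ℝ} (hσ : 0 < σ) (G : Measure ℝ) [IsProbabilityMeasure G]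
    (hG : ∀ᵐ θ ∂G, θ ∈ Icc (-c) c)
    (h : ℝ → ℝ) (hh : Continuous h) (a b : ℝ) (hb : 0 ≤ b)
    (hbd : ∀ y, |h y| ≤ a + b * y ^ 2) :
    (∫ y, h y * mixDens σ G y) = (∫ θ, (∫ z, h (θ + σ * z) * stdNormalPDF z) ∂G)
      ∧ Integrable (fun θ => ∫ z, h (θ + σ * z) * stdNormalPDF z) G := by
  set F : ℝ → ℝ → ℝ := fun θ y => h y * ((1 / σ) * stdNormalPDF ((y - θ) / σ)) with hFdef
  -- joint measurability
  have jm : AEStronglyMeasurable (Function.uncurry F) (G.prod volume) := by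
    have : Continuous (Function.uncurry F) := by
      apply (hh.comp continuous_snd).mul
      exact continuous_const.mul (phi_cont.comp ((continuous_snd.sub continuous_fst).div_const σ))
    exact this.aestronglyMeasurable
  -- bound used pointwise in z
  have hbd' : ∀ θ z : ℝ, |h (θ + σ * z)| ≤ (a + 2 * b * θ ^ 2) + 0 * |z| + (2 * b * σ ^ 2) * z ^ 2 := by
    intro θ z
    have h1 := hbd (θ + σ * z)
    have h2 : (θ + σ * z) ^ 2 ≤ 2 * θ ^ 2 + 2 * σ ^ 2 * z ^ 2 := by nlinarith [sq_nonneg (θ - σ * z)]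
    nlinarith
  -- integrability in z of h (θ + σ z) φ z
  have intz : ∀ θ : ℝ, Integrable (fun z => h (θ + σ * z) * stdNormalPDF z) := by
    intro θ
    exact integrable_bd (hh.comp (by fun_prop)).aestronglyMeasurable (hbd' θ)
  have intzabs : ∀ θ : ℝ, Integrable (fun z => |h (θ + σ * z)| * stdNormalPDF z) := by
    intro θ
    refine integrable_bd ((hh.comp (by fun_prop)).abs).aestronglyMeasurable
      (a := a + 2 * b * θ ^ 2) (b := 0) (c' := 2 * b * σ ^ 2) (fun z => ?_)
    rw [abs_abs]
    exact hbd' θ z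
  -- per-θ integrability of F θ
  have perθ : ∀ θ : ℝ, Integrable (F θ) volume := by
    intro θ
    have H : Integrable (fun z => h (θ + σ * z) * stdNormalPDF z) := intz θ
    have H1 : Integrable (fun x : ℝ => h (θ + σ * (σ⁻¹ * x)) * stdNormalPDF (σ⁻¹ * x)) :=
      H.comp_mul_left' (inv_ne_zero hσ.ne')
    have H2 := H1.comp_sub_right θ
    have H3 : Integrable (fun y : ℝ => h y * stdNormalPDF ((y - θ) / σ)) := by
      refine H2.congr (Eventually.of_forall fun y => ?_)
      simp only
      rw [show θ + σ * (σ⁻¹ * (y - θ)) = y by field_simp; ring, show σ⁻¹ * (y - θ) = (y - θ) / σ by ring]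
    refine (H3.const_mul (1 / σ)).congr (Eventually.of_forall fun y => ?_)
    rw [hFdef]
    simp only
    ring
  -- joint integrability
  have jint : Integrable (Function.uncurry F) (G.prod volume) := by
    rw [integrable_prod_iff jm]
    constructor
    · exact Eventually.of_forall perθ
    · simp only [Function.uncurry_apply_pair]
      have meas : AEStronglyMeasurable (fun θ => ∫ y, ‖F θ y‖) G := by
        have := jm.norm.integral_prod_right'
        exact this
      refine Integrable.mono' (integrable_const ((a + 2 * b * c ^ 2) + 2 * b * σ ^ 2)) meas ?_
      filter_upwards [hG] with θ hθ
      have e1 : (∫ y, ‖F θ y‖) = ∫ z, |h (θ + σ * z)| * stdNormalPDF z := by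
        have := (cov hσ θ (fun y => |h y|)).symm
        rw [← this]
        congr 1
        funext y
        rw [hFdef]
        simp only [Real.norm_eq_abs, abs_mul]
        rw [abs_of_pos (by positivity : (0:ℝ) < 1 / σ), abs_of_nonneg (phi_nonneg _)]
      have e2 : (∫ z, |h (θ + σ * z)| * stdNormalPDF z)
          ≤ ∫ z, ((a + 2 * b * θ ^ 2) + (2 * b * σ ^ 2) * z ^ 2) * stdNormalPDF z := by
        refine integral_mono (intzabs θ) ?_ (fun z => ?_)
        · exact (integrable_poly_phi (a + 2 * b * θ ^ 2) 0 (2 * b * σ ^ 2)).congr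
            (Eventually.of_forall fun z => by ring)
        · exact mul_le_mul_of_nonneg_right (by simpa using hbd' θ z) (phi_nonneg z)
      have e3 : (∫ z, ((a + 2 * b * θ ^ 2) + (2 * b * σ ^ 2) * z ^ 2) * stdNormalPDF z)
          = (a + 2 * b * θ ^ 2) + 2 * b * σ ^ 2 := by
        have : (fun z : ℝ => ((a + 2 * b * θ ^ 2) + (2 * b * σ ^ 2) * z ^ 2) * stdNormalPDF z)
            = fun z : ℝ => (a + 2 * b * θ ^ 2) * stdNormalPDF z
              + (2 * b * σ ^ 2) * (z ^ 2 * stdNormalPDF z) := by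
          funext z; ring
        rw [this, integral_add (integrable_phi.const_mul _)
          (integrable_zsq_phi.const_mul _),
          integral_const_mul, integral_phi]
        have : (∫ z : ℝ, 2 * b * σ ^ 2 * (z ^ 2 * stdNormalPDF z)) = 2 * b * σ ^ 2 := by
          rw [integral_const_mul, integral_zsq_phi, mul_one]
        rw [this]; ring
      have hθsq : θ ^ 2 ≤ c ^ 2 := by
        rcases hθ with ⟨h1, h2⟩
        nlinarith
      have e4 : (0:ℝ) ≤ ∫ y, ‖F θ y‖ := integral_nonneg fun y => norm_nonneg _
      rw [Real.norm_eq_abs, abs_of_nonneg e4, e1]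
      nlinarith
  -- conclusion 2
  have conc2 : Integrable (fun θ => ∫ z, h (θ + σ * z) * stdNormalPDF z) G := by
    have := jint.integral_prod_left
    refine this.congr (Eventually.of_forall fun θ => ?_)
    simp only
    exact (cov hσ θ h).symm
  refine ⟨?_, conc2⟩
  -- conclusion 1
  have swap := integral_integral_swap (f := F) jint
  have lhs1 : ∀ y : ℝ, (∫ θ, F θ y ∂G) = h y * mixDens σ G y := by
    intro y
    have : (fun θ => F θ y) = fun θ => (h y * (1 / σ)) * stdNormalPDF ((y - θ) / σ) := by
      funext θ; rw [hFdef]; simp only; ring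
    rw [this, integral_const_mul]
    unfold mixDens
    ring
  have rhs1 : ∀ θ : ℝ, (∫ y, F θ y) = ∫ z, h (θ + σ * z) * stdNormalPDF z := by
    intro θ
    exact (cov hσ θ h).symm
  calc (∫ y, h y * mixDens σ G y) = ∫ y, ∫ θ, F θ y ∂G := by
        congr 1; funext y; rw [lhs1 y]
    _ = ∫ θ, (∫ y, F θ y) ∂G := swap.symm
    _ = ∫ θ, (∫ z, h (θ + σ * z) * stdNormalPDF z) ∂G := by
        refine integral_congr_ae (Eventually.of_forall fun θ => ?_)
        exact rhs1 θ


/-- **SURE equals the Bayes risk at the mixture distribution**: `SURE(δ; F_G) = R(G, δ)`. -/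
theorem sure_eq_bayesRisk (σ c : ℝ) (hσ : 0 < σ) (hc : 0 < c)
    (G : Measure ℝ) [IsProbabilityMeasure G] (hG : ∀ᵐ θ ∂G, θ ∈ Icc (-c) c)
    (δ : ℝ → ℝ) (hδ : ContDiff ℝ 1 δ) (M : ℝ) (hM : ∀ y : ℝ, |deriv δ y| ≤ M) :
    SURE σ δ (mixDens σ G) = bayesRisk σ G δ := by
  have hδd : Differentiable ℝ δ := hδ.differentiable one_ne_zero
  set g : ℝ → ℝ := fun y => δ y - y with hgdef
  set g' : ℝ → ℝ := fun y => deriv δ y - 1 with hg'def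
  have hg : ∀ x, HasDerivAt g (g' x) x := fun x => ((hδd x).hasDerivAt).sub (hasDerivAt_id x)
  have hg'c : Continuous g' := (hδ.continuous_deriv le_rfl).sub continuous_const
  set K : ℝ := M + 1 with hKdef
  have hM0 : 0 ≤ M := le_trans (abs_nonneg _) (hM 0)
  have hK : ∀ x, |g' x| ≤ K := by
    intro x
    calc |g' x| = |deriv δ x - 1| := rfl
      _ ≤ |deriv δ x| + |(1:ℝ)| := abs_sub _ _
      _ ≤ M + 1 := by have := hM x; simp at *; linarith
  have hLip : ∀ x y, |g x - g y| ≤ K * |x - y| := by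
    intro x y
    have := Convex.norm_image_sub_le_of_norm_hasDerivWithin_le (f := g) (f' := g')
      (s := (univ : Set ℝ)) (fun z _ => (hg z).hasDerivWithinAt)
      (fun z _ => by simpa [Real.norm_eq_abs] using hK z) convex_univ (mem_univ y) (mem_univ x)
    simpa [Real.norm_eq_abs] using this
  -- bounds on h1 and h2
  have hgb : ∀ y, |g y| ≤ |g 0| + K * |y| := by
    intro y
    have h1 := hLip y 0
    have := abs_sub_abs_le_abs_sub (g y) (g 0)
    simp only [sub_zero] at h1
    linarith
  have hK0 : 0 ≤ K := by rw [hKdef]; linarith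
  set h1 : ℝ → ℝ := fun y => (δ y - y) ^ 2 with h1def
  have h1cont : Continuous h1 := ((hδd.continuous).sub continuous_id).pow 2
  have h1bd : ∀ y, |h1 y| ≤ 2 * (g 0) ^ 2 + (2 * K ^ 2) * y ^ 2 := by
    intro y
    have hb := hgb y
    have h2 : |h1 y| = (g y) ^ 2 := by
      rw [h1def, hgdef]; simp [abs_pow, sq_abs]
    rw [h2]
    have h3 : (g y) ^ 2 ≤ (|g 0| + K * |y|) ^ 2 := by
      have := sq_abs (g y)
      nlinarith [abs_nonneg (g y), abs_nonneg (g 0), abs_nonneg y]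
    have h4 : (|g 0| + K * |y|) ^ 2 ≤ 2 * (g 0) ^ 2 + 2 * K ^ 2 * y ^ 2 := by
      have e1 : |g 0| ^ 2 = (g 0) ^ 2 := sq_abs _
      have e2 : |y| ^ 2 = y ^ 2 := sq_abs _
      nlinarith [sq_nonneg (|g 0| - K * |y|), abs_nonneg (g 0), abs_nonneg y]
    linarith
  set h2 : ℝ → ℝ := fun y => deriv δ y - 1 with h2def
  have h2cont : Continuous h2 := hg'c
  have h2bd : ∀ y, |h2 y| ≤ K + 0 * y ^ 2 := fun y => by
    simpa using hK y
  have key1 := fubini_key hσ G hG h1 h1cont (2 * (g 0) ^ 2) (2 * K ^ 2)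
    (by positivity) h1bd
  have key2 := fubini_key hσ G hG h2 h2cont K 0 le_rfl (fun y => by simpa using h2bd y)
  -- per-θ identity
  have perθ : ∀ θ : ℝ,
      (∫ z, (δ (θ + σ * z) - θ) ^ 2 * stdNormalPDF z)
        = (∫ z, h1 (θ + σ * z) * stdNormalPDF z)
          + (2 * σ ^ 2 * (∫ z, h2 (θ + σ * z) * stdNormalPDF z) + σ ^ 2) := by
    intro θ
    have hgc : Continuous g := (hδd.continuous).sub continuous_id
    have iT1 : Integrable (fun z : ℝ => h1 (θ + σ * z) * stdNormalPDF z) := by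
      refine integrable_bd ((h1cont.comp (by fun_prop)).aestronglyMeasurable)
        (a := 2 * (g 0) ^ 2 + 2 * (2 * K ^ 2) * θ ^ 2) (b := 0)
        (c' := 2 * (2 * K ^ 2) * σ ^ 2) (fun z => ?_)
      have hb := h1bd (θ + σ * z)
      have h2' : (θ + σ * z) ^ 2 ≤ 2 * θ ^ 2 + 2 * σ ^ 2 * z ^ 2 := by
        nlinarith [sq_nonneg (θ - σ * z)]
      have hKsq : (0:ℝ) ≤ 2 * K ^ 2 := by positivity
      nlinarith
    have haffc : Continuous (fun z : ℝ => θ + σ * z) :=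
      continuous_const.add (continuous_const.mul continuous_id)
    have iT2' : Integrable (fun z : ℝ => (g (θ + σ * z) * z) * stdNormalPDF z) := by
      refine integrable_bd (((hgc.comp haffc).mul continuous_id).aestronglyMeasurable)
        (a := 0) (b := |g θ|) (c' := K * σ) (fun z => ?_)
      have hb' : |g (θ + σ * z)| ≤ |g θ| + K * σ * |z| := by
        have h1' := hLip (θ + σ * z) θ
        rw [show θ + σ * z - θ = σ * z by ring, abs_mul, abs_of_pos hσ] at h1'
        have := abs_sub_abs_le_abs_sub (g (θ + σ * z)) (g θ)
        linarith
      have h2' : |g (θ + σ * z) * z| = |g (θ + σ * z)| * |z| := abs_mul _ _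
      have h3 : (0:ℝ) ≤ |z| := abs_nonneg z
      have h4 : |z| * |z| = z ^ 2 := by
        rw [← abs_mul, abs_mul_self z, sq]
      have h5 := mul_le_mul_of_nonneg_right hb' h3
      calc |g (θ + σ * z) * z| = |g (θ + σ * z)| * |z| := h2'
        _ ≤ (|g θ| + K * σ * |z|) * |z| := h5
        _ = |g θ| * |z| + K * σ * (|z| * |z|) := by ring
        _ = 0 + |g θ| * |z| + K * σ * z ^ 2 := by rw [h4]; ring
    have iT2 : Integrable (fun z : ℝ => g (θ + σ * z) * (z * stdNormalPDF z)) :=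
      iT2'.congr (Eventually.of_forall fun z => by ring)
    have iT3 : Integrable (fun z : ℝ => z ^ 2 * stdNormalPDF z) := integrable_zsq_phi
    have split : ∀ z : ℝ, (δ (θ + σ * z) - θ) ^ 2 * stdNormalPDF z
        = h1 (θ + σ * z) * stdNormalPDF z
          + ((2 * σ) * (g (θ + σ * z) * (z * stdNormalPDF z))
            + σ ^ 2 * (z ^ 2 * stdNormalPDF z)) := by
      intro z
      simp only [h1def, hgdef]
      ring
    calc (∫ z, (δ (θ + σ * z) - θ) ^ 2 * stdNormalPDF z)
        = ∫ z, (h1 (θ + σ * z) * stdNormalPDF z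
          + ((2 * σ) * (g (θ + σ * z) * (z * stdNormalPDF z))
            + σ ^ 2 * (z ^ 2 * stdNormalPDF z))) := by
          congr 1; funext z; exact split z
      _ = (∫ z, h1 (θ + σ * z) * stdNormalPDF z)
          + ((∫ z, (2 * σ) * (g (θ + σ * z) * (z * stdNormalPDF z)))
            + ∫ z, σ ^ 2 * (z ^ 2 * stdNormalPDF z)) := by
          have hadd : Integrable (fun z : ℝ => (2 * σ) * (g (θ + σ * z) * (z * stdNormalPDF z))
              + σ ^ 2 * (z ^ 2 * stdNormalPDF z)) volume :=
            (iT2.const_mul (2 * σ)).add (iT3.const_mul (σ ^ 2))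
          rw [integral_add iT1 hadd,
            integral_add (iT2.const_mul (2 * σ)) (iT3.const_mul (σ ^ 2))]
      _ = (∫ z, h1 (θ + σ * z) * stdNormalPDF z)
          + (2 * σ ^ 2 * (∫ z, h2 (θ + σ * z) * stdNormalPDF z) + σ ^ 2) := by
          rw [integral_const_mul, integral_const_mul, integral_zsq_phi,
            stein hg hg'c hK hLip hσ θ, hg'def]
          ring
  -- assemble
  have base : SURE σ δ (mixDens σ G)
      = (∫ θ, (∫ z, h1 (θ + σ * z) * stdNormalPDF z) ∂G)
        + 2 * σ ^ 2 * (∫ θ, (∫ z, h2 (θ + σ * z) * stdNormalPDF z) ∂G) + σ ^ 2 := by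
    unfold SURE
    rw [← key1.1, ← key2.1]
  rw [base]
  unfold bayesRisk
  have eq2 : (∫ θ, (∫ z, (δ (θ + σ * z) - θ) ^ 2 * stdNormalPDF z) ∂G)
      = ∫ θ, ((∫ z, h1 (θ + σ * z) * stdNormalPDF z)
        + (2 * σ ^ 2 * (∫ z, h2 (θ + σ * z) * stdNormalPDF z) + σ ^ 2)) ∂G :=
    integral_congr_ae (Eventually.of_forall perθ)
  have hadd2 : Integrable (fun θ : ℝ => 2 * σ ^ 2 * (∫ z, h2 (θ + σ * z) * stdNormalPDF z)
      + σ ^ 2) G := (key2.2.const_mul (2 * σ ^ 2)).add (integrable_const (σ ^ 2))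
  rw [eq2, integral_add key1.2 hadd2,
    integral_add (key2.2.const_mul (2 * σ ^ 2)) (integrable_const (σ ^ 2)),
    integral_const_mul, integral_const]
  simp only [probReal_univ, one_smul]
  ring
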